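/- For every d ≥ 2 and every m ≥ 1 there exists p₀ = p₀(d,m) such that for every prime p > p₀ and any affine subspaces U₁, ..., U_m of F_p^d, each of dimension at least 1, there exists a linear hyperplane H of F_p^d (a (d-1)-dimensional subspace passing through the origin) which intersects every U_i. -/

import Mathlib

/-- for every `d ≥ 2` and `m ≥ 1` there is `p₀ = p₀(d, m)` such that for
every prime `p > p₀` and any affine subspaces `U₁, …, U_m` of `𝔽_p^d` of dimension at
least `1` (i.e. nonempty with direction of rank at least `1`), there exists a linear
hyperplane `H` (a `(d-1)`-dimensional subspace through the origin) intersecting every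
`U_i`. -/
theorem generic_hyperplane (d m : ℕ) (hd : 2 ≤ d) (hm : 1 ≤ m) :
    ∃ p₀ : ℕ, ∀ p : ℕ, p.Prime → p₀ < p →
      ∀ U : Fin m → AffineSubspace (ZMod p) (Fin d → ZMod p),
        (∀ i, (U i : Set (Fin d → ZMod p)).Nonempty) →
        (∀ i, 1 ≤ Module.finrank (ZMod p) (U i).direction) →
        ∃ H : Submodule (ZMod p) (Fin d → ZMod p),
          Module.finrank (ZMod p) H = d - 1 ∧
          ∀ i, ∃ x, x ∈ U i ∧ x ∈ H := by
  classical
  refine ⟨m, fun p hp hpm U hne hdim => ?_⟩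
  haveI : Fact p.Prime := ⟨hp⟩
  have hVrank : Module.finrank (ZMod p) (Fin d → ZMod p) = d := by
    simp [Module.finrank_fintype_fun_eq_card]
  haveI : Finite (Module.Dual (ZMod p) (Fin d → ZMod p)) :=
    Module.finite_of_finite (ZMod p)
  haveI : Fintype (Module.Dual (ZMod p) (Fin d → ZMod p)) := Fintype.ofFinite _
  -- the bad sets of functionals
  set W : Fin m → Submodule (ZMod p) (Module.Dual (ZMod p) (Fin d → ZMod p)) :=
    fun i => (U i).direction.dualAnnihilator with hW
  have hWrank : ∀ i, Module.finrank (ZMod p) (W i) ≤ d - 1 := by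
    intro i
    have h1 : Module.finrank (ZMod p) ((Fin d → ZMod p) ⧸ (U i).direction)
        = Module.finrank (ZMod p) (W i) :=
      LinearEquiv.finrank_eq (Subspace.quotEquivAnnihilator (U i).direction)
    have h2 := Submodule.finrank_quotient_add_finrank (U i).direction
    rw [hVrank] at h2
    have := hdim i
    omega
  -- cardinality of a submodule
  have hcard : ∀ (W' : Submodule (ZMod p) (Module.Dual (ZMod p) (Fin d → ZMod p))),
      Fintype.card W' = p ^ Module.finrank (ZMod p) W' := by
    intro W'
    have := Module.card_eq_pow_finrank (K := ZMod p) (V := W')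
    simpa [ZMod.card] using this
  have hDcard : Fintype.card (Module.Dual (ZMod p) (Fin d → ZMod p)) = p ^ d := by
    have := Module.card_eq_pow_finrank (K := ZMod p)
      (V := Module.Dual (ZMod p) (Fin d → ZMod p))
    rw [this, ZMod.card, Subspace.dual_finrank_eq, hVrank]
  -- find a functional avoiding all annihilators
  have key : ∃ φ : Module.Dual (ZMod p) (Fin d → ZMod p), ∀ i, φ ∉ W i := by
    by_contra hcon
    push_neg at hcon
    have hsub : (Finset.univ : Finset (Module.Dual (ZMod p) (Fin d → ZMod p))) ⊆
        Finset.univ.biUnion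
          (fun i => (W i : Set (Module.Dual (ZMod p) (Fin d → ZMod p))).toFinset) := by
      intro φ _
      obtain ⟨i, hi⟩ := hcon φ
      exact Finset.mem_biUnion.2 ⟨i, Finset.mem_univ i, Set.mem_toFinset.2 hi⟩
    have hle := (Finset.card_le_card hsub).trans (Finset.card_biUnion_le)
    have hbound : ∀ i : Fin m,
        ((W i : Set (Module.Dual (ZMod p) (Fin d → ZMod p))).toFinset).card
          ≤ p ^ (d - 1) := by
      intro i
      rw [Set.toFinset_card]
      calc Fintype.card ((W i : Set (Module.Dual (ZMod p) (Fin d → ZMod p)))) =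
          Fintype.card (W i) := Fintype.card_congr (Equiv.refl _)
        _ = p ^ Module.finrank (ZMod p) (W i) := hcard (W i)
        _ ≤ p ^ (d - 1) := Nat.pow_le_pow_right hp.pos (hWrank i)
    have hsum : ∑ i : Fin m,
        ((W i : Set (Module.Dual (ZMod p) (Fin d → ZMod p))).toFinset).card
        ≤ m * p ^ (d - 1) := by
      calc ∑ i : Fin m,
            ((W i : Set (Module.Dual (ZMod p) (Fin d → ZMod p))).toFinset).card
          ≤ ∑ _i : Fin m, p ^ (d - 1) := Finset.sum_le_sum (fun i _ => hbound i)
        _ = m * p ^ (d - 1) := by simp [Finset.sum_const, mul_comm]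
    have hcardU : (Finset.univ : Finset (Module.Dual (ZMod p) (Fin d → ZMod p))).card
        = p ^ d := by rw [Finset.card_univ, hDcard]
    have hfinal : p ^ d ≤ m * p ^ (d - 1) := by
      rw [← hcardU]; exact hle.trans hsum
    have hlt : m * p ^ (d - 1) < p ^ d := by
      have hpow : p ^ d = p * p ^ (d - 1) := by
        rw [← pow_succ']
        congr 1
        omega
      rw [hpow]
      exact (Nat.mul_lt_mul_right (Nat.pow_pos hp.pos)).2 hpm
    omega
  obtain ⟨φ, hφ⟩ := key
  -- φ ≠ 0 since 0 is in every annihilator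
  have hφ0 : φ ≠ 0 := by
    intro h
    exact hφ ⟨0, hm⟩ (h ▸ Submodule.zero_mem _)
  refine ⟨LinearMap.ker φ, ?_, ?_⟩
  · -- finrank of kernel
    have hrk := LinearMap.finrank_range_add_finrank_ker φ
    rw [hVrank] at hrk
    have hrange : LinearMap.range φ = ⊤ := by
      rcases LinearMap.surjective_or_eq_zero φ with h | h
      · exact LinearMap.range_eq_top.2 h
      · exact absurd h hφ0
    rw [hrange, finrank_top, Module.finrank_self] at hrk
    omega
  · intro i
    have hni := hφ i
    rw [hW, Submodule.mem_dualAnnihilator] at hni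
    push_neg at hni
    obtain ⟨v, hv, hv0⟩ := hni
    obtain ⟨a, ha⟩ := hne i
    refine ⟨(-(φ a) / (φ v)) • v +ᵥ a, ?_, ?_⟩
    · exact AffineSubspace.vadd_mem_of_mem_direction
        (Submodule.smul_mem _ _ hv) ha
    · show φ _ = 0
      have hx : ((-(φ a) / (φ v)) • v +ᵥ a) = (-(φ a) / (φ v)) • v + a := rfl
      rw [hx, map_add, map_smul, smul_eq_mul]
      field_simp
      ring
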